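/- For a simple, properly ordered Bratteli-Vershik system (X,T), the following statements are equivalent: (1) (X,T) is weakly well timed; (2) some telescoping of (X,T) is well timed; (3) (X,T) is conjugate to a well timed system. -/

import Mathlib

set_option autoImplicit false

/-- An ordered Bratteli diagram: finite nonempty vertex sets `V n`, a single root
vertex at level `0`, finite edge sets `E n` (edges from level `n` to level `n+1`,
multiple edges allowed), every vertex has an outgoing edge, every non-root vertex
an incoming edge, and the edges into each vertex carry a linear order, encoded by
the relation `elt` which relates only edges with the same target. -/
structure BDiagram where
  V : ℕ → Type
  E : ℕ → Type
  fintV : ∀ n, Fintype (V n)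
  fintE : ∀ n, Fintype (E n)
  nonV : ∀ n, Nonempty (V n)
  rootSubsingleton : Subsingleton (V 0)
  src : ∀ {n}, E n → V n
  tgt : ∀ {n}, E n → V (n + 1)
  hasOut : ∀ (n : ℕ) (v : V n), ∃ e : E n, src e = v
  hasIn : ∀ (n : ℕ) (v : V (n + 1)), ∃ e : E n, tgt e = v
  elt : ∀ {n}, E n → E n → Prop
  elt_tgt : ∀ (n : ℕ) (e f : E n), elt e f → tgt e = tgt f
  elt_irrefl : ∀ (n : ℕ) (e : E n), ¬ elt e e
  elt_trans : ∀ (n : ℕ) (e f g : E n), elt e f → elt f g → elt e g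
  elt_total : ∀ (n : ℕ) (e f : E n), tgt e = tgt f → e ≠ f → elt e f ∨ elt f e

namespace BDiagram

variable (B : BDiagram)

def castV {m n : ℕ} (h : m = n) (v : B.V m) : B.V n := h ▸ v

/-- An edge is minimal if no edge (into the same target) is below it. -/
def IsMinEdge {n : ℕ} (e : B.E n) : Prop := ∀ e' : B.E n, ¬ B.elt e' e

/-- An edge is maximal if no edge (into the same target) is above it. -/
def IsMaxEdge {n : ℕ} (e : B.E n) : Prop := ∀ e' : B.E n, ¬ B.elt e e'

/-- The space of infinite paths from the root. -/
def PathSpace : Type := { x : ∀ n, B.E n // ∀ n, B.tgt (x n) = B.src (x (n + 1)) }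

def IsMinPath (x : B.PathSpace) : Prop := ∀ n, B.IsMinEdge (x.1 n)

def IsMaxPath (x : B.PathSpace) : Prop := ∀ n, B.IsMaxEdge (x.1 n)

/-- Properly ordered: unique minimal and unique maximal path. -/
def ProperlyOrdered : Prop :=
  (∃! x : B.PathSpace, B.IsMinPath x) ∧ (∃! x : B.PathSpace, B.IsMaxPath x)

/-- The partial order on cofinal paths: `x < y` iff they eventually agree and at the
last disagreement the edge of `x` is below the edge of `y`. -/
def pathLT (x y : B.PathSpace) : Prop :=
  ∃ N : ℕ, B.elt (x.1 N) (y.1 N) ∧ ∀ n : ℕ, N < n → x.1 n = y.1 n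

/-- `T` is the Vershik map: each non-maximal path goes to its successor, and each
maximal path goes to a minimal path. -/
def IsVershik (T : B.PathSpace ≃ B.PathSpace) : Prop :=
  (∀ x : B.PathSpace, ¬ B.IsMaxPath x →
    B.pathLT x (T x) ∧ ∀ z : B.PathSpace, B.pathLT x z → ¬ B.pathLT z (T x)) ∧
  (∀ x : B.PathSpace, B.IsMaxPath x → B.IsMinPath (T x))

/-- `f` is a chain of consecutive edges on levels `[a, b)`. -/
def SegOn (f : ∀ i, B.E i) (a b : ℕ) : Prop :=
  ∀ i : ℕ, a ≤ i → i + 1 < b → B.tgt (f i) = B.src (f (i + 1))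

/-- Simplicity: some telescoping has complete connections between adjacent levels. -/
def Simple : Prop :=
  ∃ ns : ℕ → ℕ, StrictMono ns ∧ ns 0 = 0 ∧
    ∀ (l c : ℕ), ns (l + 1) = c + 1 →
      ∀ (v : B.V (ns l)) (w : B.V (c + 1)),
        ∃ f : ∀ i, B.E i, B.SegOn f (ns l) (c + 1) ∧ B.src (f (ns l)) = v ∧ B.tgt (f c) = w

/-- The natural (Cantor) topology on the path space, induced from the product of
the discrete topologies on the edge sets. -/
def pathTop : TopologicalSpace B.PathSpace :=
  TopologicalSpace.induced Subtype.val (@Pi.topologicalSpace ℕ B.E (fun _ => ⊥))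

/-- Integer iterates of a bijection of the path space. -/
def iterZ (T : B.PathSpace ≃ B.PathSpace) (m : ℤ) : B.PathSpace ≃ B.PathSpace :=
  (T : Equiv.Perm B.PathSpace) ^ m

/-- Two paths have the same `k`-coding: for every time `m` the initial segments of
`T^m x` and `T^m y` from the root to level `k` coincide. -/
def SameCoding (T : B.PathSpace ≃ B.PathSpace) (k : ℕ) (x y : B.PathSpace) : Prop :=
  ∀ (m : ℤ) (i : ℕ), i < k → ((B.iterZ T m) x).1 i = ((B.iterZ T m) y).1 i

/-- A depth `k` pair: distinct paths with the same `k`-coding but not the same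
`(k+1)`-coding. -/
def DepthPair (T : B.PathSpace ≃ B.PathSpace) (k : ℕ) (x y : B.PathSpace) : Prop :=
  x ≠ y ∧ B.SameCoding T k x y ∧ ¬ B.SameCoding T (k + 1) x y

/-- The pair `x, y` has a `j` cut: for some time `m`, both `T^m x` and `T^m y` are
minimal from the root into level `j`. -/
def HasCut (T : B.PathSpace ≃ B.PathSpace) (j : ℕ) (x y : B.PathSpace) : Prop :=
  ∃ m : ℤ, (∀ i : ℕ, i < j → B.IsMinEdge (((B.iterZ T m) x).1 i)) ∧
    (∀ i : ℕ, i < j → B.IsMinEdge (((B.iterZ T m) y).1 i))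

/-- Nonexpansive: for every `k ≥ 1` there are two distinct paths with the same
`k`-coding. -/
def Nonexpansive (T : B.PathSpace ≃ B.PathSpace) : Prop :=
  ∀ k : ℕ, 1 ≤ k → ∃ x y : B.PathSpace, x ≠ y ∧ B.SameCoding T k x y

/-- Well timed: for every `k ≥ 1` and every `j > k` there is a depth `k` pair with
a `j` cut. -/
def WellTimed (T : B.PathSpace ≃ B.PathSpace) : Prop :=
  ∀ k : ℕ, 1 ≤ k → ∀ j : ℕ, k < j →
    ∃ x y : B.PathSpace, B.DepthPair T k x y ∧ B.HasCut T j x y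

/-- Very well timed: for every `k ≥ 1` there is a depth `k` pair having a `j` cut
for every `j > k`. -/
def VeryWellTimed (T : B.PathSpace ≃ B.PathSpace) : Prop :=
  ∀ k : ℕ, 1 ≤ k →
    ∃ x y : B.PathSpace, B.DepthPair T k x y ∧ ∀ j : ℕ, k < j → B.HasCut T j x y

/-- Weakly well timed: for infinitely many `k ≥ 1`, for every `j > k` there is a
depth `k` pair with a `j` cut. -/
def WeaklyWellTimed (T : B.PathSpace ≃ B.PathSpace) : Prop :=
  ∀ K : ℕ, ∃ k : ℕ, K ≤ k ∧ 1 ≤ k ∧ ∀ j : ℕ, k < j →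
    ∃ x y : B.PathSpace, B.DepthPair T k x y ∧ B.HasCut T j x y

/-- Untimed: for every `k ≥ 1` there is a `j > k` such that no depth `k` pair has a
`j` cut. -/
def Untimed (T : B.PathSpace ≃ B.PathSpace) : Prop :=
  ∀ k : ℕ, 1 ≤ k → ∃ j : ℕ, k < j ∧
    ∀ x y : B.PathSpace, B.DepthPair T k x y → ¬ B.HasCut T j x y

/-- Very untimed: for every `k ≥ 1`, no depth `k` pair has a `(k+1)` cut. -/
def VeryUntimed (T : B.PathSpace ≃ B.PathSpace) : Prop :=
  ∀ k : ℕ, 1 ≤ k →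
    ∀ x y : B.PathSpace, B.DepthPair T k x y → ¬ B.HasCut T (k + 1) x y

/-- Finite paths from the root to level `n`. -/
def FinPath (n : ℕ) : Type :=
  { f : (i : Fin n) → B.E i.val //
    ∀ (i : ℕ) (h : i + 1 < n), B.tgt (f ⟨i, by omega⟩) = B.src (f ⟨i + 1, h⟩) }

/-- The lexicographic (from the end) order on finite paths to level `n` induced by
the orders on the edges. -/
def finLT {n : ℕ} (p q : B.FinPath n) : Prop :=
  ∃ (N : ℕ) (h : N < n), B.elt (p.1 ⟨N, h⟩) (q.1 ⟨N, h⟩) ∧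
    ∀ (i : ℕ) (hi : i < n), N < i → p.1 ⟨i, hi⟩ = q.1 ⟨i, hi⟩

/-- The finite path `p` to level `n` ends at the vertex `v`. -/
def EndsAt {n : ℕ} (p : B.FinPath n) (v : B.V n) : Prop :=
  ∀ (m : ℕ) (h : n = m + 1), B.tgt (p.1 ⟨m, by omega⟩) = B.castV h v

/-- The initial segment of an infinite path, from the root to level `n`. -/
def pathInit (x : B.PathSpace) (n : ℕ) : B.FinPath n :=
  ⟨fun i => x.1 i.val, fun i _ => x.2 i⟩

/-- The vertex of an infinite path at level `n`. -/
def pathVert (x : B.PathSpace) (n : ℕ) : B.V n := B.src (x.1 n)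

theorem pathInit_endsAt (x : B.PathSpace) (n : ℕ) :
    B.EndsAt (B.pathInit x n) (B.pathVert x n) := by
  intro m h
  subst h
  exact x.2 m

/-- Truncation of a finite path to a lower level. -/
def truncTo {n : ℕ} (k : ℕ) (hk : k ≤ n) (p : B.FinPath n) : B.FinPath k :=
  ⟨fun i => p.1 ⟨i.val, by omega⟩, fun i h => p.2 i (by omega)⟩

/-- Paths `x, x'` are `k`-equivalent at level `n`: there is an order isomorphism
between the sets of finite paths from the root into their level-`n` vertices which
preserves truncations to level `k` (equality of `k`-basic blocks) and which matches
the initial segment of `x` with the initial segment of `x'` (the "dot" is in the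
same place). -/
def KEquivAt (k n : ℕ) (x x' : B.PathSpace) : Prop :=
  ∃ φ : { p : B.FinPath n // B.EndsAt p (B.pathVert x n) } ≃
      { p : B.FinPath n // B.EndsAt p (B.pathVert x' n) },
    (∀ p q, B.finLT p.1 q.1 ↔ B.finLT (φ p).1 (φ q).1) ∧
    (∀ p (i : ℕ) (hik : i < k) (hin : i < n), ((φ p).1).1 ⟨i, hin⟩ = (p.1).1 ⟨i, hin⟩) ∧
    φ ⟨B.pathInit x n, B.pathInit_endsAt x n⟩ = ⟨B.pathInit x' n, B.pathInit_endsAt x' n⟩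

/-- Paths are `k`-equivalent: they agree from the root to level `k` and are
`k`-equivalent at every level `n > k`. -/
def KEquivPaths (k : ℕ) (x x' : B.PathSpace) : Prop :=
  (∀ i : ℕ, i < k → x.1 i = x'.1 i) ∧ ∀ n : ℕ, k < n → B.KEquivAt k n x x'

/-- Standard nonexpansive: for every `k ≥ 1` there is a pair of distinct
`k`-equivalent paths. -/
def SNE : Prop := ∀ k : ℕ, 1 ≤ k → ∃ x x' : B.PathSpace, x ≠ x' ∧ B.KEquivPaths k x x'

/-!  ### Telescoping  -/

theorem castV_eq_of_heq {m n : ℕ} (h : m = n) {v : B.V m} {w : B.V n} (hw : HEq v w) :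
    B.castV h v = w := by
  subst h
  exact eq_of_heq hw

theorem castV_heq {m n : ℕ} (h : m = n) (v : B.V m) : HEq (B.castV h v) v := by
  subst h
  rfl

theorem castV_inj {m n : ℕ} (h : m = n) {v w : B.V m}
    (hvw : B.castV h v = B.castV h w) : v = w := by
  subst h
  exact hvw

def castE {m n : ℕ} (h : m = n) (e : B.E m) : B.E n := h ▸ e

noncomputable def chainFrom (a : ℕ) (v : B.V a) : (i : ℕ) → B.E (a + i)
  | 0 => (B.hasOut a v).choose
  | i + 1 => (B.hasOut (a + i + 1) (B.tgt (chainFrom a v i))).choose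

theorem chainFrom_src_zero (a : ℕ) (v : B.V a) : B.src (B.chainFrom a v 0) = v :=
  (B.hasOut a v).choose_spec

theorem chainFrom_src_succ (a : ℕ) (v : B.V a) (i : ℕ) :
    B.src (B.chainFrom a v (i + 1)) = B.tgt (B.chainFrom a v i) :=
  (B.hasOut (a + i + 1) (B.tgt (B.chainFrom a v i))).choose_spec

noncomputable def chainTo (a : ℕ) : (j : ℕ) → (w : B.V (a + j + 1)) → (i : ℕ) → i ≤ j → B.E (a + i)
  | 0, w, i, _ => B.castE (by omega : a + 0 = a + i) (B.hasIn a w).choose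
  | j + 1, w, i, _ =>
      if h : i ≤ j then chainTo a j (B.src (B.hasIn (a + j + 1) w).choose) i h
      else B.castE (by omega : a + (j + 1) = a + i) (B.hasIn (a + j + 1) w).choose

theorem chainTo_tgt_last (a : ℕ) : ∀ (j : ℕ) (w : B.V (a + j + 1)),
    B.tgt (B.chainTo a j w j le_rfl) = w := by
  intro j w
  cases j with
  | zero =>
      simp only [chainTo]
      exact (B.hasIn a w).choose_spec
  | succ j =>
      simp only [chainTo]
      rw [dif_neg (by omega : ¬ j + 1 ≤ j)]
      exact (B.hasIn (a + j + 1) w).choose_spec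

theorem chainTo_chain (a : ℕ) : ∀ (j : ℕ) (w : B.V (a + j + 1)) (i : ℕ) (h : i + 1 ≤ j)
    (h' : i ≤ j), B.tgt (B.chainTo a j w i h') = B.src (B.chainTo a j w (i + 1) h) := by
  intro j
  induction j with
  | zero => intro w i h h'; omega
  | succ j ih =>
      intro w i h h'
      by_cases hij : i + 1 ≤ j
      · simp only [chainTo]
        rw [dif_pos (by omega : i ≤ j), dif_pos hij]
        exact ih _ i hij (by omega)
      · have hi : i = j := by omega
        subst hi
        simp only [chainTo]
        rw [dif_pos (le_refl i), dif_neg (by omega : ¬ i + 1 ≤ i)]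
        exact B.chainTo_tgt_last a i _


def TelE (a b : ℕ) : Type :=
  { f : (i : Fin (b - a)) → B.E (a + i.val) //
    ∀ (i : ℕ) (h : i + 1 < b - a), B.tgt (f ⟨i, by omega⟩) = B.src (f ⟨i + 1, h⟩) }

def telSrc {a b : ℕ} (hab : a < b) (f : B.TelE a b) : B.V a :=
  B.src (f.1 ⟨0, by omega⟩)

def telTgt {a b : ℕ} (hab : a < b) (f : B.TelE a b) : B.V b :=
  B.castV (by omega : a + (b - a - 1) + 1 = b) (B.tgt (f.1 ⟨b - a - 1, by omega⟩))

def telLT {a b : ℕ} (f g : B.TelE a b) : Prop :=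
  ∃ (N : ℕ) (h : N < b - a), B.elt (f.1 ⟨N, h⟩) (g.1 ⟨N, h⟩) ∧
    ∀ (i : ℕ) (hi : i < b - a), N < i → f.1 ⟨i, hi⟩ = g.1 ⟨i, hi⟩

noncomputable def Telescope (ns : ℕ → ℕ) (hmono : StrictMono ns) (h0 : ns 0 = 0) : BDiagram where
  V l := B.V (ns l)
  E l := B.TelE (ns l) (ns (l + 1))
  fintV l := B.fintV (ns l)
  fintE l := by
    classical
    letI : ∀ i : Fin (ns (l + 1) - ns l), Fintype (B.E (ns l + i.val)) := fun i => B.fintE _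
    exact Subtype.fintype _
  nonV l := B.nonV (ns l)
  rootSubsingleton := by show Subsingleton (B.V (ns 0)); rw [h0]; exact B.rootSubsingleton
  src {l} f := B.telSrc (hmono (Nat.lt_succ_self l)) f
  tgt {l} f := B.telTgt (hmono (Nat.lt_succ_self l)) f
  hasOut := by
    intro l v
    refine ⟨⟨fun i => B.chainFrom (ns l) v i.val,
      fun i h => (B.chainFrom_src_succ (ns l) v i).symm⟩, ?_⟩
    exact B.chainFrom_src_zero (ns l) v
  hasIn := by
    intro l w
    have hab : ns l < ns (l + 1) := hmono (Nat.lt_succ_self l)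
    have hj : ns l + (ns (l + 1) - ns l - 1) + 1 = ns (l + 1) := by omega
    refine ⟨⟨fun i => B.chainTo (ns l) (ns (l + 1) - ns l - 1) (B.castV hj.symm w) i.val
        (by omega), fun i h => B.chainTo_chain _ _ _ i (by omega) (by omega)⟩, ?_⟩
    show B.castV (by omega) (B.tgt (B.chainTo (ns l) (ns (l + 1) - ns l - 1)
      (B.castV hj.symm w) (ns (l + 1) - ns l - 1) (by omega))) = w
    rw [B.chainTo_tgt_last]
    exact B.castV_eq_of_heq _ (B.castV_heq _ w)
  elt {l} f g := B.telLT f g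
  elt_tgt := by
    rintro l f g ⟨N, hN, hlt, hgt⟩
    show B.telTgt _ f = B.telTgt _ g
    unfold telTgt
    refine congrArg (B.castV _) ?_
    rcases eq_or_lt_of_le (show N ≤ ns (l + 1) - ns l - 1 by omega) with h | h
    · subst h
      exact B.elt_tgt _ _ _ hlt
    · exact congrArg B.tgt (hgt _ (by omega) h)
  elt_irrefl := by
    rintro l f ⟨N, h, hlt, -⟩
    exact B.elt_irrefl _ _ hlt
  elt_trans := by
    rintro l f g h ⟨N₁, hN₁, hlt₁, hgt₁⟩ ⟨N₂, hN₂, hlt₂, hgt₂⟩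
    rcases lt_trichotomy N₁ N₂ with hc | hc | hc
    · exact ⟨N₂, hN₂, by rw [hgt₁ N₂ hN₂ hc]; exact hlt₂,
        fun i hi hN => (hgt₁ i hi (by omega)).trans (hgt₂ i hi hN)⟩
    · subst hc
      exact ⟨N₁, hN₁, B.elt_trans _ _ _ _ hlt₁ hlt₂,
        fun i hi hN => (hgt₁ i hi hN).trans (hgt₂ i hi hN)⟩
    · refine ⟨N₁, hN₁, ?_, fun i hi hN => (hgt₁ i hi hN).trans (hgt₂ i hi (by omega))⟩
      rw [← hgt₂ N₁ hN₁ hc]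
      exact hlt₁
  elt_total := by
    intro l f g htgt hne
    classical
    have hab : ns l < ns (l + 1) := hmono (Nat.lt_succ_self l)
    set b := ns (l + 1) - ns l with hb
    have hex : ∃ N, ∃ h : N < b, f.1 ⟨N, h⟩ ≠ g.1 ⟨N, h⟩ := by
      by_contra hco
      push_neg at hco
      exact hne (Subtype.ext (funext fun i => hco i.val i.isLt))
    set P : ℕ → Prop := fun N => ∃ h : N < b, f.1 ⟨N, h⟩ ≠ g.1 ⟨N, h⟩ with hP
    obtain ⟨N₀, hN₀⟩ := hex
    set N := Nat.findGreatest P b with hNdef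
    have hPN : P N := Nat.findGreatest_spec (le_of_lt hN₀.choose) hN₀
    have hafter : ∀ i (hi : i < b), N < i → f.1 ⟨i, hi⟩ = g.1 ⟨i, hi⟩ := by
      intro i hi hNi
      by_contra hcon
      exact Nat.findGreatest_is_greatest hNi (le_of_lt hi) ⟨hi, hcon⟩
    clear_value N
    obtain ⟨hNb, hNne⟩ := hPN
    have htgtN : B.tgt (f.1 ⟨N, hNb⟩) = B.tgt (g.1 ⟨N, hNb⟩) := by
      rcases eq_or_lt_of_le (show N ≤ b - 1 by omega) with h | h
      · -- N is the last index; use equality of targets of the composite edges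
        subst h
        exact B.castV_inj _ htgt
      · have h2 : f.1 ⟨N + 1, by omega⟩ = g.1 ⟨N + 1, by omega⟩ :=
          hafter (N + 1) (by omega) (by omega)
        rw [f.2 N (by omega), g.2 N (by omega), h2]
    rcases B.elt_total _ _ _ htgtN hNne with h | h
    · exact Or.inl ⟨N, hNb, h, hafter⟩
    · exact Or.inr ⟨N, hNb, h, fun i hi hN => (hafter i hi hN).symm⟩

def teleMap (ns : ℕ → ℕ) (hmono : StrictMono ns) (h0 : ns 0 = 0) (x : B.PathSpace) :
    (B.Telescope ns hmono h0).PathSpace :=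
  ⟨fun l => ⟨fun i => x.1 (ns l + i.val), fun i _ => x.2 (ns l + i)⟩, fun l => by
    have hab : ns l < ns (l + 1) := hmono (Nat.lt_succ_self l)
    have hm : ns l + (ns (l + 1) - ns l - 1) + 1 = ns (l + 1) := by omega
    show B.castV _ (B.tgt (x.1 (ns l + (ns (l + 1) - ns l - 1)))) = B.src (x.1 (ns (l + 1) + 0))
    rw [x.2 (ns l + (ns (l + 1) - ns l - 1))]
    exact B.castV_eq_of_heq _ (by rw [hm]; exact HEq.rfl)⟩


/-- Level `n+1` is uniformly ordered: there is a single nonempty block `P` of paths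
from the root to level `n` such that the `n`-basic block at every vertex at level
`n+1` is a positive power of `P`. -/
def UniformlyOrderedLevel (n : ℕ) : Prop :=
  ∃ (p : ℕ) (hp : 0 < p) (P : Fin p → B.FinPath n),
    ∀ v : B.V (n + 1), ∃ (m : ℕ), 0 < m ∧
      ∃ enum : Fin (m * p) ≃ { q : B.FinPath (n + 1) // B.EndsAt q v },
        (∀ i j : Fin (m * p), i < j ↔ B.finLT (enum i).1 (enum j).1) ∧
        (∀ i : Fin (m * p),
          B.truncTo n (Nat.le_succ n) (enum i).1 = P ⟨i.val % p, Nat.mod_lt _ hp⟩)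

/-- The ordinal label of an edge: its position in the linear order on the edges
into its target. -/
noncomputable def edgeLabel {n : ℕ} (e : B.E n) : ℕ := Nat.card { e' : B.E n // B.elt e' e }

/-- Deterministic: for every `n ≥ 1`, distinct edges with the same source at level
`n` have different ordinal labels. -/
def Deterministic : Prop :=
  ∀ n : ℕ, 1 ≤ n → ∀ e f : B.E n, B.src e = B.src f → e ≠ f →
    B.edgeLabel e ≠ B.edgeLabel f

end BDiagram

/-- A Bratteli–Vershik system: a simple, properly ordered ordered Bratteli diagram
together with its Vershik map. -/
structure BVSystem where
  B : BDiagram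
  T : B.PathSpace ≃ B.PathSpace
  proper : B.ProperlyOrdered
  simple : B.Simple
  vershik : B.IsVershik T

/-- Conjugacy of systems: an equivariant homeomorphism of the path spaces taking
minimal paths to minimal paths. -/
def Conjugate (S S' : BVSystem) : Prop :=
  ∃ φ : S.B.PathSpace ≃ S'.B.PathSpace,
    (@Continuous _ _ S.B.pathTop S'.B.pathTop φ) ∧
    (@Continuous _ _ S'.B.pathTop S.B.pathTop φ.symm) ∧
    (∀ x, φ (S.T x) = S'.T (φ x)) ∧
    (∀ x, S.B.IsMinPath x → S'.B.IsMinPath (φ x))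

/-- An odometer: a system whose diagram has exactly one vertex at every level. -/
def IsOdometer (S : BVSystem) : Prop := ∀ n, Subsingleton (S.B.V n)


/-! ### Auxiliary development for the main theorem -/

namespace BDiagram

variable (B : BDiagram)

theorem castV_self {n : ℕ} (h : n = n) (v : B.V n) : B.castV h v = v := rfl

theorem castE_heq {m n : ℕ} (h : m = n) (e : B.E m) : HEq (B.castE h e) e := by
  subst h; rfl

theorem src_castE {m n : ℕ} (h : m = n) (e : B.E m) :
    B.src (B.castE h e) = B.castV h (B.src e) := by subst h; rfl

theorem tgt_castE {m n : ℕ} (h : m = n) (e : B.E m) :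
    B.tgt (B.castE h e) = B.castV (by rw [h]) (B.tgt e) := by subst h; rfl

theorem elt_castE {m n : ℕ} (h : m = n) (e f : B.E m) :
    B.elt (B.castE h e) (B.castE h f) ↔ B.elt e f := by subst h; exact Iff.rfl

theorem castV_congr {m n k : ℕ} (h1 : m = k) (h2 : n = k) {u : B.V m} {w : B.V n}
    (huw : HEq u w) : B.castV h1 u = B.castV h2 w := by
  subst h1; subst h2; exact congrArg _ (eq_of_heq huw)

theorem castE_val_eq (x : B.PathSpace) {a b : ℕ} (h : a = b) :
    B.castE h (x.1 a) = x.1 b := by cases h; rfl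

theorem castE_eval_fin {m c : ℕ} (p : (t : Fin m) → B.E (c + t.val)) {a b : ℕ}
    (ha : a < m) (hb : b < m) (hab : a = b) (h : c + a = c + b) :
    B.castE h (p ⟨a, ha⟩) = p ⟨b, hb⟩ := by cases hab; rfl

theorem src_fin_congr {c m : ℕ} (p : (t : Fin m) → B.E (c + t.val)) {s t : Fin m}
    (h : s = t) : HEq (B.src (p s)) (B.src (p t)) := by subst h; rfl

theorem tgt_fin_congr {c m : ℕ} (p : (t : Fin m) → B.E (c + t.val)) {s t : Fin m}
    (h : s = t) : HEq (B.tgt (p s)) (B.tgt (p t)) := by subst h; rfl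

/-- Some edge at each level. -/
noncomputable def someEdge (n : ℕ) : B.E n :=
  (B.hasOut n (Classical.choice (B.nonV n))).choose

theorem src_heq {m n : ℕ} (h : m = n) {e : B.E m} {f : B.E n} (hef : HEq e f) :
    HEq (B.src e) (B.src f) := by subst h; rw [eq_of_heq hef]

theorem tgt_heq {m n : ℕ} (h : m = n) {e : B.E m} {f : B.E n} (hef : HEq e f) :
    HEq (B.tgt e) (B.tgt f) := by subst h; rw [eq_of_heq hef]

theorem chainTo_heq_t (a j : ℕ) (w : B.V (a + j + 1)) {t t' : ℕ} (h : t = t')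
    (ht : t ≤ j) (ht' : t' ≤ j) :
    HEq (B.chainTo a j w t ht) (B.chainTo a j w t' ht') := by subst h; rfl

/-! ### Modifying a path at one level -/

/-- The path obtained from `x` by replacing the edge at level `i` by `e'` and the
initial segment by an arbitrary path into the source of `e'`. -/
noncomputable def prefRaw (x : B.PathSpace) (i : ℕ) (e' : B.E i) (j : ℕ) : B.E j :=
  if hj : j < i then
    B.castE (Nat.zero_add j)
      (B.chainTo 0 (i - 1) (B.castV (show i = 0 + (i - 1) + 1 by omega) (B.src e')) j
        (by omega))
  else if hj2 : j = i then B.castE hj2.symm e'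
  else x.1 j

theorem prefRaw_lt (x : B.PathSpace) (i : ℕ) (e' : B.E i) {j : ℕ} (hj : j < i) :
    prefRaw B x i e' j =
      B.castE (Nat.zero_add j)
        (B.chainTo 0 (i - 1) (B.castV (show i = 0 + (i - 1) + 1 by omega) (B.src e')) j
          (by omega)) := by
  unfold prefRaw; rw [dif_pos hj]

theorem prefRaw_eq (x : B.PathSpace) (i : ℕ) (e' : B.E i) :
    prefRaw B x i e' i = e' := by
  unfold prefRaw; rw [dif_neg (lt_irrefl i), dif_pos rfl]; rfl

theorem prefRaw_gt (x : B.PathSpace) (i : ℕ) (e' : B.E i) {j : ℕ} (hj : i < j) :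
    prefRaw B x i e' j = x.1 j := by
  unfold prefRaw; rw [dif_neg (by omega), dif_neg (by omega)]

theorem prefRaw_chain (x : B.PathSpace) (i : ℕ) (e' : B.E i)
    (hte : B.tgt e' = B.tgt (x.1 i)) (j : ℕ) :
    B.tgt (prefRaw B x i e' j) = B.src (prefRaw B x i e' (j + 1)) := by
  rcases lt_trichotomy (j + 1) i with hA | hB | hC
  · rw [prefRaw_lt B x i e' (by omega), prefRaw_lt B x i e' hA]
    rw [B.tgt_castE, B.src_castE]
    apply B.castV_congr
    exact heq_of_eq (B.chainTo_chain 0 (i - 1) _ j (by omega) (by omega))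
  · subst hB
    rw [prefRaw_lt B x (j + 1) e' (Nat.lt_succ_self j), prefRaw_eq]
    rw [B.tgt_castE]
    apply B.castV_congr (h2 := rfl)
    refine HEq.trans (B.tgt_heq (by omega)
      (B.chainTo_heq_t 0 (j + 1 - 1) _ (show j = j + 1 - 1 by omega) _ le_rfl)) ?_
    refine HEq.trans (heq_of_eq (B.chainTo_tgt_last 0 (j + 1 - 1) _)) ?_
    exact B.castV_heq _ _
  · rcases lt_or_eq_of_le (Nat.succ_le_of_lt hC) with hC2 | hC2
    · rw [prefRaw_gt B x i e' (by omega), prefRaw_gt B x i e' (by omega)]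
      exact x.2 j
    · have hji : j = i := by omega
      subst hji
      rw [prefRaw_eq, prefRaw_gt B x j e' (Nat.lt_succ_self j), hte]
      exact x.2 j

/-- Replace the edge at level `i` and the initial segment below it. -/
noncomputable def prefPath (x : B.PathSpace) (i : ℕ) (e' : B.E i)
    (hte : B.tgt e' = B.tgt (x.1 i)) : B.PathSpace :=
  ⟨prefRaw B x i e', prefRaw_chain B x i e' hte⟩

/-! ### Order characterizations of minimal and maximal paths -/

theorem isMinPath_iff_forall (x : B.PathSpace) :
    B.IsMinPath x ↔ ∀ z, ¬ B.pathLT z x := by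
  constructor
  · rintro h z ⟨N, helt, -⟩
    exact h N (z.1 N) helt
  · intro h n e' helt
    have hte : B.tgt e' = B.tgt (x.1 n) := B.elt_tgt n _ _ helt
    refine h (B.prefPath x n e' hte) ⟨n, ?_, ?_⟩
    · show B.elt (prefRaw B x n e' n) (x.1 n)
      rw [prefRaw_eq]; exact helt
    · intro m hm
      show prefRaw B x n e' m = x.1 m
      rw [prefRaw_gt B x n e' hm]

theorem isMaxPath_iff_forall (x : B.PathSpace) :
    B.IsMaxPath x ↔ ∀ z, ¬ B.pathLT x z := by
  constructor
  · rintro h z ⟨N, helt, -⟩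
    exact h N (z.1 N) helt
  · intro h n e' helt
    have hte : B.tgt e' = B.tgt (x.1 n) := (B.elt_tgt n _ _ helt).symm
    refine h (B.prefPath x n e' hte) ⟨n, ?_, ?_⟩
    · show B.elt (x.1 n) (prefRaw B x n e' n)
      rw [prefRaw_eq]; exact helt
    · intro m hm
      show x.1 m = prefRaw B x n e' m
      rw [prefRaw_gt B x n e' hm]

/-- Any two paths strictly above a common path are comparable. -/
theorem pathLT_total {x y z : B.PathSpace} (hxy : B.pathLT x y) (hxz : B.pathLT x z) :
    y = z ∨ B.pathLT y z ∨ B.pathLT z y := by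
  classical
  by_cases hyz : y = z
  · exact Or.inl hyz
  obtain ⟨N1, -, ha1⟩ := hxy
  obtain ⟨N2, -, ha2⟩ := hxz
  have hbd : ∀ n, max N1 N2 < n → y.1 n = z.1 n := fun n hn =>
    (ha1 n (by omega)).symm.trans (ha2 n (by omega))
  have hne : ∃ n, y.1 n ≠ z.1 n := by
    by_contra hco
    push_neg at hco
    exact hyz (Subtype.ext (funext hco))
  obtain ⟨n₀, hn₀⟩ := hne
  set P : ℕ → Prop := fun n => y.1 n ≠ z.1 n with hP
  set N := Nat.findGreatest P (max N1 N2) with hN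
  have hn₀le : n₀ ≤ max N1 N2 := by
    by_contra hco; push_neg at hco; exact hn₀ (hbd n₀ hco)
  have hPN : P N := Nat.findGreatest_spec hn₀le hn₀
  have habove : ∀ n, N < n → y.1 n = z.1 n := by
    intro n hn
    by_cases hn' : n ≤ max N1 N2
    · by_contra hco
      exact Nat.findGreatest_is_greatest hn hn' hco
    · exact hbd n (by omega)
  have htgt : B.tgt (y.1 N) = B.tgt (z.1 N) := by
    rw [y.2 N, z.2 N, habove (N + 1) (Nat.lt_succ_self N)]
  rcases B.elt_total N _ _ htgt hPN with h | h
  · exact Or.inr (Or.inl ⟨N, h, habove⟩)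
  · exact Or.inr (Or.inr ⟨N, h, fun n hn => (habove n hn).symm⟩)

/-- The Vershik map of a diagram with a unique minimal path is unique. -/
theorem vershik_unique (hp : ∃! m : B.PathSpace, B.IsMinPath m)
    {T1 T2 : B.PathSpace ≃ B.PathSpace} (h1 : B.IsVershik T1) (h2 : B.IsVershik T2) :
    ∀ x, T1 x = T2 x := by
  intro x
  by_cases hx : B.IsMaxPath x
  · obtain ⟨m, -, hu⟩ := hp
    rw [hu _ (h1.2 x hx), hu _ (h2.2 x hx)]
  · obtain ⟨hlt1, hmin1⟩ := h1.1 x hx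
    obtain ⟨hlt2, hmin2⟩ := h2.1 x hx
    rcases B.pathLT_total hlt1 hlt2 with he | hlt | hlt
    · exact he
    · exact absurd hlt (hmin2 _ hlt1)
    · exact absurd hlt (hmin1 _ hlt2)

/-! ### Chains and full connections -/

/-- The chain `f` ends at the vertex `w` at level `b`. -/
def ChainEnds (f : ∀ i, B.E i) (b : ℕ) (w : B.V b) : Prop :=
  ∀ c (h : b = c + 1), B.tgt (f c) = B.castV h w

theorem chainFrom_heq (a : ℕ) (v : B.V a) {t t' : ℕ} (h : t = t') :
    HEq (B.chainFrom a v t) (B.chainFrom a v t') := by subst h; rfl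

theorem srcF_heq (f : ∀ i, B.E i) {m n : ℕ} (h : m = n) :
    HEq (B.src (f m)) (B.src (f n)) := by subst h; rfl

/-- A forward chain starting at `v`. -/
noncomputable def fwdChain (a : ℕ) (v : B.V a) : ∀ i, B.E i := fun i =>
  if h : a ≤ i then B.castE (show a + (i - a) = i by omega) (B.chainFrom a v (i - a))
  else B.someEdge i

theorem fwdChain_src (a : ℕ) (v : B.V a) : B.src (B.fwdChain a v a) = v := by
  unfold fwdChain
  rw [dif_pos le_rfl, B.src_castE]
  refine eq_of_heq (HEq.trans (B.castV_heq _ _) ?_)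
  refine HEq.trans (B.src_heq (by omega) (B.chainFrom_heq a v (show a - a = 0 by omega))) ?_
  exact heq_of_eq (B.chainFrom_src_zero a v)

theorem fwdChain_seg (a : ℕ) (v : B.V a) {i : ℕ} (hi : a ≤ i) :
    B.tgt (B.fwdChain a v i) = B.src (B.fwdChain a v (i + 1)) := by
  unfold fwdChain
  rw [dif_pos hi, dif_pos (by omega), B.tgt_castE, B.src_castE]
  apply B.castV_congr
  refine HEq.trans (heq_of_eq (B.chainFrom_src_succ a v (i - a)).symm) ?_
  exact B.src_heq (by omega) (B.chainFrom_heq a v (show i - a + 1 = i + 1 - a by omega))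

/-- A backward chain ending at `w`. -/
noncomputable def bwdChain (b : ℕ) (hb : 1 ≤ b) (w : B.V b) : ∀ i, B.E i := fun i =>
  if h : i + 1 ≤ b then
    B.castE (Nat.zero_add i)
      (B.chainTo 0 (b - 1) (B.castV (show b = 0 + (b - 1) + 1 by omega) w) i (by omega))
  else B.someEdge i

theorem bwdChain_seg (b : ℕ) (hb : 1 ≤ b) (w : B.V b) {i : ℕ} (hi : i + 2 ≤ b) :
    B.tgt (B.bwdChain b hb w i) = B.src (B.bwdChain b hb w (i + 1)) := by
  unfold bwdChain
  rw [dif_pos (by omega), dif_pos (by omega), B.tgt_castE, B.src_castE]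
  apply B.castV_congr
  exact heq_of_eq (B.chainTo_chain 0 (b - 1) _ i (by omega) (by omega))

theorem bwdChain_ends (b : ℕ) (hb : 1 ≤ b) (w : B.V b) :
    B.ChainEnds (B.bwdChain b hb w) b w := by
  intro c h
  unfold bwdChain
  rw [dif_pos (by omega), B.tgt_castE]
  apply B.castV_congr
  refine HEq.trans (B.tgt_heq (by omega)
    (B.chainTo_heq_t 0 (b - 1) _ (show c = b - 1 by omega) (by omega) le_rfl)) ?_
  refine HEq.trans (heq_of_eq (B.chainTo_tgt_last 0 (b - 1) _)) ?_
  exact B.castV_heq _ _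

theorem ends_match (f g : ∀ i, B.E i) {m : ℕ} {u : B.V m} (hend : B.ChainEnds f m u)
    (hsrc : B.src (g m) = u) : ∀ c, m = c + 1 → B.tgt (f c) = B.src (g (c + 1)) := by
  intro c h
  subst h
  rw [hend c rfl]
  exact hsrc.symm

/-- Gluing two chains at level `m`. -/
def glueF (f g : ∀ i, B.E i) (m : ℕ) : ∀ i, B.E i := fun i => if i < m then f i else g i

theorem glueF_segOn {a m b : ℕ} (f g : ∀ i, B.E i) (hf : B.SegOn f a m)
    (hg : B.SegOn g m b)
    (hmatch : ∀ c, m = c + 1 → a ≤ c → B.tgt (f c) = B.src (g (c + 1))) :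
    B.SegOn (B.glueF f g m) a b := by
  intro i hi hib
  unfold glueF
  rcases lt_trichotomy (i + 1) m with hA | hB | hC
  · rw [if_pos (by omega), if_pos hA]
    exact hf i hi (by omega)
  · rw [if_pos (by omega), if_neg (by omega)]
    exact hmatch i hB.symm hi
  · rw [if_neg (by omega), if_neg (by omega)]
    exact hg i (by omega) hib

theorem glueF_ge (f g : ∀ i, B.E i) {m i : ℕ} (h : m ≤ i) : B.glueF f g m i = g i :=
  if_neg (by omega)

theorem glueF_lt (f g : ∀ i, B.E i) {m i : ℕ} (h : i < m) : B.glueF f g m i = f i :=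
  if_pos h

/-- Full connection between two levels: every vertex at level `a` is joined to every
vertex at level `b` by a chain. -/
def FullConn (a b : ℕ) : Prop :=
  ∀ (v : B.V a) (w : B.V b),
    ∃ f : ∀ i, B.E i, B.SegOn f a b ∧ B.src (f a) = v ∧ B.ChainEnds f b w

theorem fullConn_comp {a m b : ℕ} (ham : a < m) (hmb : m < b) (h1 : B.FullConn a m)
    (h2 : B.FullConn m b) : B.FullConn a b := by
  intro v w
  obtain ⟨u⟩ := B.nonV m
  obtain ⟨f, hf, hfs, hfe⟩ := h1 v u
  obtain ⟨g, hg, hgs, hge⟩ := h2 u w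
  refine ⟨B.glueF f g m, B.glueF_segOn f g
    (fun i hi hib => hf i hi hib) (fun i hi hib => hg i hi (by omega))
    (fun c hc _ => B.ends_match f g hfe hgs c hc), ?_, ?_⟩
  · rw [B.glueF_lt f g ham]; exact hfs
  · intro c hc
    rw [B.glueF_ge f g (by omega)]
    exact hge c hc

theorem fullConn_step (ns' : ℕ → ℕ) (hm' : StrictMono ns') (h0' : ns' 0 = 0)
    (hS : ∀ (l c : ℕ), ns' (l + 1) = c + 1 →
      ∀ (v : B.V (ns' l)) (w : B.V (c + 1)),
        ∃ f : ∀ i, B.E i, B.SegOn f (ns' l) (c + 1) ∧ B.src (f (ns' l)) = v ∧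
          B.tgt (f c) = w)
    (p : ℕ) : B.FullConn (ns' p) (ns' (p + 1)) := by
  intro v w
  have hpos : 1 ≤ ns' (p + 1) := by
    have h1 := hm' (show p < p + 1 by omega)
    omega
  have hc : ns' (p + 1) = (ns' (p + 1) - 1) + 1 := by omega
  obtain ⟨f, hseg, hsrc, htgt⟩ := hS p (ns' (p + 1) - 1) hc v (B.castV hc w)
  refine ⟨f, by rw [hc]; exact hseg, hsrc, ?_⟩
  intro c h
  have hcc : c = ns' (p + 1) - 1 := by omega
  subst hcc
  exact htgt

theorem fullConn_many (ns' : ℕ → ℕ) (hm' : StrictMono ns') (h0' : ns' 0 = 0)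
    (hS : ∀ (l c : ℕ), ns' (l + 1) = c + 1 →
      ∀ (v : B.V (ns' l)) (w : B.V (c + 1)),
        ∃ f : ∀ i, B.E i, B.SegOn f (ns' l) (c + 1) ∧ B.src (f (ns' l)) = v ∧
          B.tgt (f c) = w) :
    ∀ q p, p < q → B.FullConn (ns' p) (ns' q) := by
  intro q
  induction q with
  | zero => intro p hp; omega
  | succ q ih =>
      intro p hp
      rcases lt_or_eq_of_le (Nat.le_of_lt_succ hp) with hlt | heq
      · exact B.fullConn_comp (hm' hlt) (hm' (Nat.lt_succ_self q)) (ih p hlt)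
          (B.fullConn_step ns' hm' h0' hS q)
      · subst heq
        exact B.fullConn_step ns' hm' h0' hS p

theorem fullConn_extend {a b a' b' : ℕ} (ha : a ≤ a') (hb : b' ≤ b) (hab : a' < b')
    (h : B.FullConn a' b') : B.FullConn a b := by
  intro v w
  rcases lt_or_eq_of_le hb with hbl | hbe
  · -- b' < b : glue a backward chain on the right
    have hb1 : 1 ≤ b := by omega
    obtain ⟨f2, hseg2, hsrc2, hend2⟩ :=
      h (B.src (B.fwdChain a v a')) (B.src (B.bwdChain b hb1 w b'))
    have hinner : B.SegOn (B.glueF f2 (B.bwdChain b hb1 w) b') a' b :=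
      B.glueF_segOn f2 (B.bwdChain b hb1 w) hseg2
        (fun i hi hib => B.bwdChain_seg b hb1 w (by omega))
        (fun c hc _ => B.ends_match f2 (B.bwdChain b hb1 w) hend2 rfl c hc)
    refine ⟨B.glueF (B.fwdChain a v) (B.glueF f2 (B.bwdChain b hb1 w) b') a', ?_, ?_, ?_⟩
    · refine B.glueF_segOn (B.fwdChain a v) _
        (fun i hi hib => B.fwdChain_seg a v hi) hinner ?_
      intro c hc hac
      subst hc
      rw [B.fwdChain_seg a v hac]
      rw [B.glueF_lt f2 (B.bwdChain b hb1 w) (show c + 1 < b' by omega)]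
      exact hsrc2.symm
    · rcases lt_or_eq_of_le ha with hlt | heq
      · rw [B.glueF_lt _ _ hlt]
        exact B.fwdChain_src a v
      · subst heq
        rw [B.glueF_ge _ _ le_rfl, B.glueF_lt f2 _ hab]
        rw [hsrc2]
        exact B.fwdChain_src a v
    · intro c hc
      rw [B.glueF_ge _ _ (show a' ≤ c by omega), B.glueF_ge _ _ (show b' ≤ c by omega)]
      exact B.bwdChain_ends b hb1 w c hc
  · -- b' = b
    subst hbe
    obtain ⟨f2, hseg2, hsrc2, hend2⟩ := h (B.src (B.fwdChain a v a')) w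
    refine ⟨B.glueF (B.fwdChain a v) f2 a', ?_, ?_, ?_⟩
    · refine B.glueF_segOn (B.fwdChain a v) f2
        (fun i hi hib => B.fwdChain_seg a v hi) hseg2 ?_
      intro c hc hac
      subst hc
      rw [B.fwdChain_seg a v hac]
      exact hsrc2.symm
    · rcases lt_or_eq_of_le ha with hlt | heq
      · rw [B.glueF_lt _ _ hlt]
        exact B.fwdChain_src a v
      · subst heq
        rw [B.glueF_ge _ _ le_rfl]
        rw [hsrc2]
        exact B.fwdChain_src a v
    · intro c hc
      rw [B.glueF_ge _ _ (show a' ≤ c by omega)]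
      exact hend2 c hc

theorem perm_conj_zpow {α β : Type} (φ : α ≃ β) (T : Equiv.Perm α) (T' : Equiv.Perm β)
    (h : ∀ x, φ (T x) = T' (φ x)) :
    ∀ (m : ℤ) (x : α), φ ((T ^ m) x) = (T' ^ m) (φ x) := by
  have hsymm : ∀ x, φ (T.symm x) = T'.symm (φ x) := by
    intro x
    have := h (T.symm x)
    rw [Equiv.apply_symm_apply] at this
    rw [this, Equiv.symm_apply_apply]
  intro m
  induction m using Int.induction_on with
  | zero => intro x; simp
  | succ k ih =>
      intro x
      rw [zpow_add_one, Equiv.Perm.mul_apply, zpow_add_one, Equiv.Perm.mul_apply, ih, h]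
  | pred k ih =>
      intro x
      rw [zpow_sub_one, Equiv.Perm.mul_apply, zpow_sub_one, Equiv.Perm.mul_apply, ih]
      congr 1
      exact hsymm x

theorem sameCoding_mono (T : B.PathSpace ≃ B.PathSpace) {k k' : ℕ} (h : k' ≤ k)
    {x y : B.PathSpace} (hs : B.SameCoding T k x y) : B.SameCoding T k' x y :=
  fun m i hi => hs m i (lt_of_lt_of_le hi h)

theorem hasCut_mono (T : B.PathSpace ≃ B.PathSpace) {j j' : ℕ} (h : j' ≤ j)
    {x y : B.PathSpace} : B.HasCut T j x y → B.HasCut T j' x y :=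
  fun ⟨m, h1, h2⟩ => ⟨m, fun i hi => h1 i (by omega), fun i hi => h2 i (by omega)⟩

section Tele

variable (ns : ℕ → ℕ)

/-- The telescope level containing a given level. -/
noncomputable def lidx (i : ℕ) : ℕ := Nat.findGreatest (fun l => ns l ≤ i) i

theorem lidx_le (h0 : ns 0 = 0) (i : ℕ) : ns (lidx ns i) ≤ i := by
  classical
  exact Nat.findGreatest_spec (P := fun l => ns l ≤ i) (m := 0) (Nat.zero_le i)
    (show ns 0 ≤ i by rw [h0]; exact Nat.zero_le i)

theorem lt_lidx_succ (hmono : StrictMono ns) (i : ℕ) : i < ns (lidx ns i + 1) := by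
  classical
  by_contra hcon
  push_neg at hcon
  exact Nat.findGreatest_is_greatest (P := fun l => ns l ≤ i) (n := i)
    (Nat.lt_succ_self _) (le_trans hmono.le_apply hcon) hcon

theorem lidx_unique (hmono : StrictMono ns) (h0 : ns 0 = 0) {l i : ℕ}
    (h1 : ns l ≤ i) (h2 : i < ns (l + 1)) : lidx ns i = l := by
  rcases lt_trichotomy (lidx ns i) l with hc | hc | hc
  · exact absurd h1 (Nat.findGreatest_is_greatest (P := fun l => ns l ≤ i) (n := i) hc
      (le_trans hmono.le_apply h1))
  · exact hc
  · have : ns (l + 1) ≤ ns (lidx ns i) := hmono.monotone hc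
    exact absurd (lt_of_le_of_lt (this.trans (lidx_le ns h0 i)) h2) (lt_irrefl _)

theorem lidx_lt (hmono : StrictMono ns) (h0 : ns 0 = 0) {l i : ℕ} (h : i < ns l) :
    lidx ns i < l := by
  by_contra hcon
  push_neg at hcon
  exact absurd (lt_of_le_of_lt (le_trans (hmono.monotone hcon) (lidx_le ns h0 i)) h)
    (lt_irrefl _)

variable (hmono : StrictMono ns) (h0 : ns 0 = 0)

variable {B}

/-- Raw concatenation function. -/
noncomputable def concRaw (y : (B.Telescope ns hmono h0).PathSpace) (i : ℕ) : B.E i :=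
  have h1 : ns (lidx ns i) ≤ i := lidx_le ns h0 i
  have h2 : i < ns (lidx ns i + 1) := lt_lidx_succ ns hmono i
  B.castE (show ns (lidx ns i) + (i - ns (lidx ns i)) = i by omega)
    ((y.1 (lidx ns i)).1 ⟨i - ns (lidx ns i), by omega⟩)

theorem concRaw_spec (y : (B.Telescope ns hmono h0).PathSpace) {i l : ℕ}
    (h1 : ns l ≤ i) (h2 : i < ns (l + 1)) :
    concRaw ns hmono h0 y i =
      B.castE (show ns l + (i - ns l) = i by omega)
        ((y.1 l).1 ⟨i - ns l, show i - ns l < ns (l + 1) - ns l by omega⟩) := by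
  have hl : lidx ns i = l := lidx_unique ns hmono h0 h1 h2
  subst hl
  rfl

theorem concRaw_chain (y : (B.Telescope ns hmono h0).PathSpace) (i : ℕ) :
    B.tgt (concRaw ns hmono h0 y i) = B.src (concRaw ns hmono h0 y (i + 1)) := by
  set l := lidx ns i with hldef
  have h1 : ns l ≤ i := lidx_le ns h0 i
  have h2 : i < ns (l + 1) := lt_lidx_succ ns hmono i
  rw [concRaw_spec ns hmono h0 y h1 h2]
  rcases lt_or_eq_of_le (Nat.succ_le_of_lt h2) with hA | hB
  · -- interior of a block
    rw [concRaw_spec ns hmono h0 y (l := l) (by omega) hA]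
    rw [B.tgt_castE, B.src_castE]
    apply B.castV_congr
    exact HEq.trans (heq_of_eq ((y.1 l).2 (i - ns l) (by omega)))
      (B.src_fin_congr (fun s => (y.1 l).1 s)
        (by apply Fin.ext; show (i - ns l) + 1 = i + 1 - ns l; omega))
  · -- block boundary
    have hlt2 : ns (l + 1) < ns (l + 1 + 1) := hmono (show l + 1 < l + 1 + 1 by omega)
    rw [concRaw_spec ns hmono h0 y (l := l + 1) (by omega) (by omega)]
    rw [B.tgt_castE, B.src_castE]
    apply B.castV_congr
    have hlt1 : ns l < ns (l + 1) := hmono (show l < l + 1 by omega)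
    have hy2 : B.castV (show ns l + (ns (l + 1) - ns l - 1) + 1 = ns (l + 1) by omega)
        (B.tgt ((y.1 l).1 ⟨ns (l + 1) - ns l - 1,
          show ns (l + 1) - ns l - 1 < ns (l + 1) - ns l by omega⟩)) =
        B.src ((y.1 (l + 1)).1 ⟨0, show 0 < ns (l + 1 + 1) - ns (l + 1) by omega⟩) := y.2 l
    refine HEq.trans (B.tgt_fin_congr (fun s => (y.1 l).1 s)
        (show _ = (⟨ns (l + 1) - ns l - 1, show ns (l + 1) - ns l - 1 < ns (l + 1) - ns l
          by omega⟩ : Fin (ns (l + 1) - ns l))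
         by apply Fin.ext; show i - ns l = ns (l + 1) - ns l - 1; omega)) ?_
    refine HEq.trans (HEq.trans (B.castV_heq _ _).symm (heq_of_eq hy2)) ?_
    exact B.src_fin_congr (fun s => (y.1 (l + 1)).1 s)
      (by apply Fin.ext; show 0 = i + 1 - ns (l + 1); omega)

/-- Concatenation: inverse of `teleMap`. -/
noncomputable def conc (y : (B.Telescope ns hmono h0).PathSpace) : B.PathSpace :=
  ⟨concRaw ns hmono h0 y, concRaw_chain ns hmono h0 y⟩

theorem conc_teleMap (x : B.PathSpace) :
    conc ns hmono h0 (B.teleMap ns hmono h0 x) = x := by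
  apply Subtype.ext
  funext i
  show concRaw ns hmono h0 _ i = x.1 i
  rw [concRaw_spec ns hmono h0 _ (lidx_le ns h0 i) (lt_lidx_succ ns hmono i)]
  exact B.castE_val_eq x (by have := lidx_le ns h0 i; omega)

theorem teleMap_conc (y : (B.Telescope ns hmono h0).PathSpace) :
    B.teleMap ns hmono h0 (conc ns hmono h0 y) = y := by
  apply Subtype.ext
  funext l
  apply Subtype.ext
  funext t
  show concRaw ns hmono h0 y (ns l + t.val) = (y.1 l).1 t
  have ht : (t : ℕ) < ns (l + 1) - ns l := t.isLt
  rw [concRaw_spec ns hmono h0 y (l := l) (Nat.le_add_right _ _) (by omega)]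
  exact B.castE_eval_fin (fun s => (y.1 l).1 s) (by omega) t.isLt (by omega) _

/-- The natural bijection between the path space and the path space of a telescoping. -/
noncomputable def teleEquiv : B.PathSpace ≃ (B.Telescope ns hmono h0).PathSpace :=
  ⟨B.teleMap ns hmono h0, conc ns hmono h0, conc_teleMap ns hmono h0,
    teleMap_conc ns hmono h0⟩


theorem pathLT_teleMap (x x' : B.PathSpace) :
    B.pathLT x x' ↔
      (B.Telescope ns hmono h0).pathLT (B.teleMap ns hmono h0 x)
        (B.teleMap ns hmono h0 x') := by
  constructor
  · rintro ⟨N, helt, hab⟩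
    set l := lidx ns N with hldef
    have h1 : ns l ≤ N := lidx_le ns h0 N
    have h2 : N < ns (l + 1) := lt_lidx_succ ns hmono N
    refine ⟨l, ?_, ?_⟩
    · refine ⟨N - ns l, by omega, ?_, ?_⟩
      · show B.elt (x.1 (ns l + (N - ns l))) (x'.1 (ns l + (N - ns l)))
        have hNo : ns l + (N - ns l) = N := by omega
        rwa [← hNo] at helt
      · intro t ht htN
        show x.1 (ns l + t) = x'.1 (ns l + t)
        exact hab (ns l + t) (by omega)
    · intro n hn
      apply Subtype.ext
      funext t
      show x.1 (ns n + t.val) = x'.1 (ns n + t.val)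
      have : ns (l + 1) ≤ ns n := hmono.monotone hn
      exact hab (ns n + t.val) (by omega)
  · rintro ⟨L, helt, hout⟩
    obtain ⟨o, ho, helt, hin⟩ := helt
    refine ⟨ns L + o, helt, ?_⟩
    intro n hn
    by_cases hcase : n < ns (L + 1)
    · have hres : x.1 (ns L + (n - ns L)) = x'.1 (ns L + (n - ns L)) :=
        hin (n - ns L) (by omega) (by omega)
      have hNo : ns L + (n - ns L) = n := by omega
      rwa [hNo] at hres
    · push_neg at hcase
      set L' := lidx ns n with hL'def
      have hl1 : ns L' ≤ n := lidx_le ns h0 n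
      have hl2 : n < ns (L' + 1) := lt_lidx_succ ns hmono n
      have hLL' : L < L' := by
        by_contra hco
        push_neg at hco
        have : ns (L' + 1) ≤ ns (L + 1) := hmono.monotone (by omega)
        omega
      have heq := hout L' hLL'
      have hcomp := congrFun (congrArg Subtype.val heq)
        (⟨n - ns L', by omega⟩ : Fin (ns (L' + 1) - ns L'))
      have hres : x.1 (ns L' + (n - ns L')) = x'.1 (ns L' + (n - ns L')) := hcomp
      have hNo : ns L' + (n - ns L') = n := by omega
      rwa [hNo] at hres

theorem isMinEdge_teleMap (x : B.PathSpace) (l : ℕ)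
    (h : ∀ i, ns l ≤ i → i < ns (l + 1) → B.IsMinEdge (x.1 i)) :
    (B.Telescope ns hmono h0).IsMinEdge ((B.teleMap ns hmono h0 x).1 l) := by
  rintro g ⟨N, hN, helt, -⟩
  exact h (ns l + N) (Nat.le_add_right _ _) (by omega) (g.1 ⟨N, hN⟩) helt

theorem isMaxEdge_teleMap (x : B.PathSpace) (l : ℕ)
    (h : ∀ i, ns l ≤ i → i < ns (l + 1) → B.IsMaxEdge (x.1 i)) :
    (B.Telescope ns hmono h0).IsMaxEdge ((B.teleMap ns hmono h0 x).1 l) := by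
  rintro g ⟨N, hN, helt, -⟩
  exact h (ns l + N) (Nat.le_add_right _ _) (by omega) (g.1 ⟨N, hN⟩) helt

theorem isMinPath_teleMap (x : B.PathSpace) (h : B.IsMinPath x) :
    (B.Telescope ns hmono h0).IsMinPath (B.teleMap ns hmono h0 x) :=
  fun l => isMinEdge_teleMap ns hmono h0 x l (fun i _ _ => h i)

theorem isMaxPath_teleMap (x : B.PathSpace) (h : B.IsMaxPath x) :
    (B.Telescope ns hmono h0).IsMaxPath (B.teleMap ns hmono h0 x) :=
  fun l => isMaxEdge_teleMap ns hmono h0 x l (fun i _ _ => h i)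

theorem isMinPath_conc (y : (B.Telescope ns hmono h0).PathSpace)
    (h : (B.Telescope ns hmono h0).IsMinPath y) : B.IsMinPath (conc ns hmono h0 y) := by
  rw [B.isMinPath_iff_forall]
  intro z hz
  have h2 := (pathLT_teleMap ns hmono h0 z (conc ns hmono h0 y)).1 hz
  rw [teleMap_conc ns hmono h0 y] at h2
  exact ((B.Telescope ns hmono h0).isMinPath_iff_forall y).1 h _ h2

theorem isMaxPath_conc (y : (B.Telescope ns hmono h0).PathSpace)
    (h : (B.Telescope ns hmono h0).IsMaxPath y) : B.IsMaxPath (conc ns hmono h0 y) := by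
  rw [B.isMaxPath_iff_forall]
  intro z hz
  have h2 := (pathLT_teleMap ns hmono h0 (conc ns hmono h0 y) z).1 hz
  rw [teleMap_conc ns hmono h0 y] at h2
  exact ((B.Telescope ns hmono h0).isMaxPath_iff_forall y).1 h _ h2

theorem telescope_proper (hp : B.ProperlyOrdered) :
    (B.Telescope ns hmono h0).ProperlyOrdered := by
  obtain ⟨⟨xmin, hxmin, humin⟩, ⟨xmax, hxmax, humax⟩⟩ := hp
  constructor
  · refine ⟨B.teleMap ns hmono h0 xmin, isMinPath_teleMap ns hmono h0 xmin hxmin, ?_⟩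
    intro y hy
    have := humin _ (isMinPath_conc ns hmono h0 y hy)
    rw [← teleMap_conc ns hmono h0 y, this]
  · refine ⟨B.teleMap ns hmono h0 xmax, isMaxPath_teleMap ns hmono h0 xmax hxmax, ?_⟩
    intro y hy
    have := humax _ (isMaxPath_conc ns hmono h0 y hy)
    rw [← teleMap_conc ns hmono h0 y, this]

/-- The Vershik map transported to the telescope. -/
noncomputable def teleT (T : B.PathSpace ≃ B.PathSpace) :
    (B.Telescope ns hmono h0).PathSpace ≃ (B.Telescope ns hmono h0).PathSpace :=
  ((teleEquiv ns hmono h0).symm.trans T).trans (teleEquiv ns hmono h0)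

theorem teleT_apply (T : B.PathSpace ≃ B.PathSpace)
    (y : (B.Telescope ns hmono h0).PathSpace) :
    teleT ns hmono h0 T y = B.teleMap ns hmono h0 (T (conc ns hmono h0 y)) := rfl

theorem teleT_isVershik (T : B.PathSpace ≃ B.PathSpace) (hT : B.IsVershik T) :
    (B.Telescope ns hmono h0).IsVershik (teleT ns hmono h0 T) := by
  constructor
  · intro y hy
    have hncy : ¬ B.IsMaxPath (conc ns hmono h0 y) := by
      intro hmax
      exact hy (by
        rw [← teleMap_conc ns hmono h0 y]
        exact isMaxPath_teleMap ns hmono h0 _ hmax)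
    obtain ⟨hlt, hmin⟩ := hT.1 _ hncy
    constructor
    · rw [teleT_apply, ← teleMap_conc ns hmono h0 y]
      rw [conc_teleMap ns hmono h0]
      exact (pathLT_teleMap ns hmono h0 _ _).1 hlt
    · intro z hz1 hz2
      have h1 : B.pathLT (conc ns hmono h0 y) (conc ns hmono h0 z) := by
        rw [pathLT_teleMap ns hmono h0, teleMap_conc ns hmono h0, teleMap_conc ns hmono h0]
        exact hz1
      have h2 : B.pathLT (conc ns hmono h0 z) (T (conc ns hmono h0 y)) := by
        rw [pathLT_teleMap ns hmono h0, teleMap_conc ns hmono h0]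
        exact hz2
      exact hmin _ h1 h2
  · intro y hy
    rw [teleT_apply]
    exact isMinPath_teleMap ns hmono h0 _
      (hT.2 _ (isMaxPath_conc ns hmono h0 y hy))


theorem teleT_iter (T : B.PathSpace ≃ B.PathSpace) (m : ℤ) (x : B.PathSpace) :
    (B.Telescope ns hmono h0).iterZ (teleT ns hmono h0 T) m (B.teleMap ns hmono h0 x) =
      B.teleMap ns hmono h0 (B.iterZ T m x) :=
  (perm_conj_zpow (teleEquiv ns hmono h0) T (teleT ns hmono h0 T)
    (fun z => by
      show B.teleMap ns hmono h0 (T z) = teleT ns hmono h0 T (B.teleMap ns hmono h0 z)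
      rw [teleT_apply, conc_teleMap]) m x).symm

theorem teleMap_agree_iff (z w : B.PathSpace) (l : ℕ) :
    (∀ i, i < ns l → z.1 i = w.1 i) ↔
      (∀ L, L < l → (B.teleMap ns hmono h0 z).1 L = (B.teleMap ns hmono h0 w).1 L) := by
  constructor
  · intro h L hL
    apply Subtype.ext
    funext t
    show z.1 (ns L + t.val) = w.1 (ns L + t.val)
    have h1 : ns (L + 1) ≤ ns l := hmono.monotone hL
    exact h (ns L + t.val) (by have := t.isLt; omega)
  · intro h i hi
    set L := lidx ns i with hLdef
    have h1 : ns L ≤ i := lidx_le ns h0 i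
    have h2 : i < ns (L + 1) := lt_lidx_succ ns hmono i
    have hcomp := congrFun (congrArg Subtype.val (h L (lidx_lt ns hmono h0 hi)))
      (⟨i - ns L, by omega⟩ : Fin (ns (L + 1) - ns L))
    have hres : z.1 (ns L + (i - ns L)) = w.1 (ns L + (i - ns L)) := hcomp
    have hNo : ns L + (i - ns L) = i := by omega
    rwa [hNo] at hres

theorem sameCoding_teleT (T : B.PathSpace ≃ B.PathSpace) (k : ℕ) (x y : B.PathSpace) :
    B.SameCoding T (ns k) x y ↔
      (B.Telescope ns hmono h0).SameCoding (teleT ns hmono h0 T) k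
        (B.teleMap ns hmono h0 x) (B.teleMap ns hmono h0 y) := by
  constructor
  · intro hs m L hL
    rw [teleT_iter, teleT_iter]
    exact (teleMap_agree_iff ns hmono h0 _ _ k).1 (fun i hi => hs m i hi) L hL
  · intro hs m i hi
    refine (teleMap_agree_iff ns hmono h0 (B.iterZ T m x) (B.iterZ T m y) k).2 ?_ i hi
    intro L hL
    rw [← teleT_iter, ← teleT_iter]
    exact hs m L hL

theorem hasCut_teleT (T : B.PathSpace ≃ B.PathSpace) (j : ℕ) (x y : B.PathSpace)
    (h : B.HasCut T (ns j) x y) :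
    (B.Telescope ns hmono h0).HasCut (teleT ns hmono h0 T) j
      (B.teleMap ns hmono h0 x) (B.teleMap ns hmono h0 y) := by
  obtain ⟨m, h1, h2⟩ := h
  refine ⟨m, ?_, ?_⟩
  · intro i hi
    rw [teleT_iter]
    exact isMinEdge_teleMap ns hmono h0 _ i
      (fun i' _ hi2 => h1 i' (lt_of_lt_of_le hi2 (hmono.monotone hi)))
  · intro i hi
    rw [teleT_iter]
    exact isMinEdge_teleMap ns hmono h0 _ i
      (fun i' _ hi2 => h2 i' (lt_of_lt_of_le hi2 (hmono.monotone hi)))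


theorem telescope_simple (hs : B.Simple) : (B.Telescope ns hmono h0).Simple := by
  classical
  obtain ⟨ns', hm', h0', hS⟩ := hs
  have hfull : ∀ q p, p < q → B.FullConn (ns' p) (ns' q) := B.fullConn_many ns' hm' h0' hS
  -- choose the telescoping levels
  set ms : ℕ → ℕ :=
    fun l => Nat.rec 0 (fun _ prev => max (prev + 1) (ns' (ns prev + 1))) l with hmsdef
  have hmssucc : ∀ l, ms (l + 1) = max (ms l + 1) (ns' (ns (ms l) + 1)) := fun l => rfl
  have hmsmono : StrictMono ms := strictMono_nat_of_lt_succ (fun l => by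
    rw [hmssucc]; omega)
  refine ⟨ms, hmsmono, rfl, ?_⟩
  intro l c hc v w
  -- connection between the B-levels
  have hp1 : ns (ms l) ≤ ns' (ns (ms l)) := StrictMono.le_apply hm'
  have hq1 : ns' (ns (ms l) + 1) ≤ ns (ms (l + 1)) := by
    have h1 : ns' (ns (ms l) + 1) ≤ ms (l + 1) := by rw [hmssucc]; omega
    exact le_trans h1 (StrictMono.le_apply hmono)
  have hpq : ns' (ns (ms l)) < ns' (ns (ms l) + 1) := hm' (Nat.lt_succ_self _)
  have hconn : B.FullConn (ns (ms l)) (ns (ms (l + 1))) :=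
    B.fullConn_extend hp1 hq1 hpq (hfull (ns (ms l) + 1) (ns (ms l)) (Nat.lt_succ_self _))
  have hw : ns (c + 1) = ns (ms (l + 1)) := by rw [hc]
  obtain ⟨f, hseg, hsrc, hend⟩ := hconn v (B.castV hw w)
  have hml : ms l < ms (l + 1) := hmsmono (Nat.lt_succ_self l)
  -- package the chain into a telescope chain
  refine ⟨fun i =>
    if hi : ms l ≤ i ∧ i + 1 ≤ ms (l + 1) then
      (⟨fun t => f (ns i + t.val), fun t ht =>
        hseg (ns i + t)
          (le_trans (hmono.monotone hi.1) (Nat.le_add_right _ _))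
          (by
            have h2 : ns (i + 1) ≤ ns (ms (l + 1)) := hmono.monotone hi.2
            omega)⟩ : (B.Telescope ns hmono h0).E i)
    else (B.Telescope ns hmono h0).someEdge i, ?_, ?_, ?_⟩
  · -- SegOn
    intro i hi hib
    beta_reduce
    erw [dif_pos (show ms l ≤ i ∧ i + 1 ≤ ms (l + 1) by omega),
      dif_pos (show ms l ≤ i + 1 ∧ i + 1 + 1 ≤ ms (l + 1) by omega)]
    have hcc : ns i < ns (i + 1) := hmono (Nat.lt_succ_self i)
    show B.castV (by omega : ns i + (ns (i + 1) - ns i - 1) + 1 = ns (i + 1))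
        (B.tgt (f (ns i + (ns (i + 1) - ns i - 1)))) = B.src (f (ns (i + 1) + (0 : ℕ)))
    refine eq_of_heq (HEq.trans (B.castV_heq _ _) ?_)
    refine HEq.trans (heq_of_eq (hseg (ns i + (ns (i + 1) - ns i - 1))
      (le_trans (hmono.monotone hi) (Nat.le_add_right _ _))
      (by
        have h2 : ns (i + 1) < ns (ms (l + 1)) := hmono (by omega)
        omega))) ?_
    exact B.srcF_heq f (by omega)
  · -- source
    beta_reduce
    erw [dif_pos (show ms l ≤ ms l ∧ ms l + 1 ≤ ms (l + 1) by omega)]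
    show B.src (f (ns (ms l) + (0 : ℕ))) = v
    exact hsrc
  · -- target
    beta_reduce
    erw [dif_pos (show ms l ≤ c ∧ c + 1 ≤ ms (l + 1) by omega)]
    have hcc : ns c < ns (c + 1) := hmono (Nat.lt_succ_self c)
    show B.castV (by omega : ns c + (ns (c + 1) - ns c - 1) + 1 = ns (c + 1))
        (B.tgt (f (ns c + (ns (c + 1) - ns c - 1)))) = w
    rw [hend (ns c + (ns (c + 1) - ns c - 1)) (by rw [← hw]; omega)]
    exact eq_of_heq ((B.castV_heq _ _).trans ((B.castV_heq _ _).trans (B.castV_heq _ _)))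

end Tele

section Topology

/-- Evaluation of a path at a level is continuous. -/
theorem continuous_evalE (i : ℕ) :
    @Continuous B.PathSpace (B.E i) B.pathTop ⊥ (fun x => x.1 i) := by
  letI : ∀ n, TopologicalSpace (B.E n) := fun _ => ⊥
  letI : TopologicalSpace B.PathSpace := B.pathTop
  exact (continuous_apply i).comp continuous_induced_dom

theorem isClosed_cyl (i : ℕ) (e : B.E i) :
    @IsClosed B.PathSpace B.pathTop {x | x.1 i = e} := by
  letI : ∀ n, TopologicalSpace (B.E n) := fun _ => ⊥
  haveI : ∀ n, DiscreteTopology (B.E n) := fun n => ⟨rfl⟩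
  letI : TopologicalSpace B.PathSpace := B.pathTop
  exact (isClosed_discrete {e}).preimage (B.continuous_evalE i)

theorem isOpen_cyl (i : ℕ) (e : B.E i) :
    @IsOpen B.PathSpace B.pathTop {x | x.1 i = e} := by
  letI : ∀ n, TopologicalSpace (B.E n) := fun _ => ⊥
  haveI : ∀ n, DiscreteTopology (B.E n) := fun n => ⟨rfl⟩
  letI : TopologicalSpace B.PathSpace := B.pathTop
  exact (isOpen_discrete {e}).preimage (B.continuous_evalE i)

/-- The path space is compact. -/
theorem pathCompactSpace : @CompactSpace B.PathSpace B.pathTop := by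
  letI : ∀ n, TopologicalSpace (B.E n) := fun _ => ⊥
  haveI : ∀ n, DiscreteTopology (B.E n) := fun n => ⟨rfl⟩
  haveI : ∀ n, Finite (B.E n) := fun n => @Finite.of_fintype _ (B.fintE n)
  letI : TopologicalSpace B.PathSpace := B.pathTop
  have hclosed : IsClosed {x : ∀ n, B.E n | ∀ n, B.tgt (x n) = B.src (x (n + 1))} := by
    rw [Set.setOf_forall]
    refine isClosed_iInter (fun n => ?_)
    have heq : {x : ∀ n, B.E n | B.tgt (x n) = B.src (x (n + 1))} =
        (fun x : ∀ n, B.E n => (x n, x (n + 1))) ⁻¹'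
          {p : B.E n × B.E (n + 1) | B.tgt p.1 = B.src p.2} := rfl
    rw [heq]
    exact IsClosed.preimage ((continuous_apply n).prodMk (continuous_apply (n + 1)))
      (isClosed_discrete _)
  exact isCompact_iff_compactSpace.mp hclosed.isCompact

end Topology

section TopologyTele

variable (ns : ℕ → ℕ) (hmono : StrictMono ns) (h0 : ns 0 = 0)

variable {B}

theorem continuous_teleMap :
    @Continuous B.PathSpace (B.Telescope ns hmono h0).PathSpace B.pathTop
      (B.Telescope ns hmono h0).pathTop (B.teleMap ns hmono h0) := by
  letI : ∀ n, TopologicalSpace (B.E n) := fun _ => ⊥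
  letI : ∀ n, TopologicalSpace ((B.Telescope ns hmono h0).E n) := fun _ => ⊥
  letI : TopologicalSpace B.PathSpace := B.pathTop
  letI : TopologicalSpace ((B.Telescope ns hmono h0).PathSpace) :=
    (B.Telescope ns hmono h0).pathTop
  refine continuous_induced_rng.mpr (continuous_pi (fun l => ?_))
  show Continuous (fun x : B.PathSpace => (B.teleMap ns hmono h0 x).1 l)
  refine continuous_def.mpr (fun U _ => ?_)
  have hU : (fun x : B.PathSpace => (B.teleMap ns hmono h0 x).1 l) ⁻¹' U =
      ⋃ e ∈ U, {x : B.PathSpace | (B.teleMap ns hmono h0 x).1 l = e} := by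
    ext x
    simp only [Set.mem_preimage, Set.mem_iUnion, Set.mem_setOf_eq]
    exact ⟨fun h => ⟨_, h, rfl⟩, fun ⟨e, he, hx⟩ => hx ▸ he⟩
  rw [hU]
  refine isOpen_biUnion (fun e _ => ?_)
  have hcyl : {x : B.PathSpace | (B.teleMap ns hmono h0 x).1 l = e} =
      ⋂ t : Fin (ns (l + 1) - ns l), {x : B.PathSpace | x.1 (ns l + t.val) = e.1 t} := by
    ext x
    simp only [Set.mem_setOf_eq, Set.mem_iInter]
    constructor
    · intro h t
      exact congrFun (congrArg Subtype.val h) t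
    · intro h
      exact Subtype.ext (funext h)
  rw [hcyl]
  exact isOpen_iInter_of_finite (fun t => B.isOpen_cyl (ns l + t.val) (e.1 t))

theorem continuous_conc :
    @Continuous (B.Telescope ns hmono h0).PathSpace B.PathSpace
      (B.Telescope ns hmono h0).pathTop B.pathTop (conc ns hmono h0) := by
  letI : ∀ n, TopologicalSpace (B.E n) := fun _ => ⊥
  letI : ∀ n, TopologicalSpace ((B.Telescope ns hmono h0).E n) := fun _ => ⊥
  haveI : ∀ n, DiscreteTopology ((B.Telescope ns hmono h0).E n) := fun n => ⟨rfl⟩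
  letI : TopologicalSpace B.PathSpace := B.pathTop
  letI : TopologicalSpace ((B.Telescope ns hmono h0).PathSpace) :=
    (B.Telescope ns hmono h0).pathTop
  refine continuous_induced_rng.mpr (continuous_pi (fun i => ?_))
  show Continuous (fun y : (B.Telescope ns hmono h0).PathSpace => (conc ns hmono h0 y).1 i)
  have hfac : (fun y : (B.Telescope ns hmono h0).PathSpace => (conc ns hmono h0 y).1 i) =
      (fun el : (B.Telescope ns hmono h0).E (lidx ns i) =>
        B.castE (show ns (lidx ns i) + (i - ns (lidx ns i)) = i from by
          have h1 : ns (lidx ns i) ≤ i := lidx_le ns h0 i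
          omega)
        (el.1 ⟨i - ns (lidx ns i), by
          have h1 : ns (lidx ns i) ≤ i := lidx_le ns h0 i
          have h2 : i < ns (lidx ns i + 1) := lt_lidx_succ ns hmono i
          omega⟩)) ∘
      (fun y => y.1 (lidx ns i)) := rfl
  rw [hfac]
  exact continuous_of_discreteTopology.comp
    ((continuous_apply (lidx ns i)).comp continuous_induced_dom)

end TopologyTele

section UniformCont

/-- Uniform continuity of a continuous map between path spaces. -/
theorem uniform_cont (B' : BDiagram) (φ : B.PathSpace → B'.PathSpace)
    (hφ : @Continuous _ _ B.pathTop B'.pathTop φ) (r : ℕ) :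
    ∃ R : ℕ, ∀ x y : B.PathSpace, (∀ i, i < R → x.1 i = y.1 i) →
      ∀ i, i < r → (φ x).1 i = (φ y).1 i := by
  classical
  letI : ∀ n, TopologicalSpace (B.E n) := fun _ => ⊥
  letI : ∀ n, TopologicalSpace (B'.E n) := fun _ => ⊥
  haveI : ∀ n, DiscreteTopology (B.E n) := fun n => ⟨rfl⟩
  haveI : ∀ n, DiscreteTopology (B'.E n) := fun n => ⟨rfl⟩
  haveI : ∀ n, Finite (B.E n) := fun n => @Finite.of_fintype _ (B.fintE n)
  haveI : ∀ n, Finite (B'.E n) := fun n => @Finite.of_fintype _ (B'.fintE n)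
  letI : TopologicalSpace B.PathSpace := B.pathTop
  letI : TopologicalSpace B'.PathSpace := B'.pathTop
  haveI : CompactSpace B.PathSpace := B.pathCompactSpace
  by_contra hcon
  push_neg at hcon
  set A : ℕ → Set (B.PathSpace × B.PathSpace) := fun R =>
    ⋂ (i : ℕ), ⋂ (_ : i < R), {p | p.1.1 i = p.2.1 i} with hA
  set Bs : Set (B.PathSpace × B.PathSpace) :=
    ⋃ (t : Fin r), {p | (φ p.1).1 t.val ≠ (φ p.2).1 t.val} with hBs
  have hclosedA : ∀ R, IsClosed (A R) := by
    intro R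
    refine isClosed_iInter (fun i => isClosed_iInter (fun _ => ?_))
    have heq : {p : B.PathSpace × B.PathSpace | p.1.1 i = p.2.1 i} =
        (fun p : B.PathSpace × B.PathSpace => (p.1.1 i, p.2.1 i)) ⁻¹'
          {q : B.E i × B.E i | q.1 = q.2} := rfl
    rw [heq]
    exact IsClosed.preimage
      (((B.continuous_evalE i).comp continuous_fst).prodMk
        ((B.continuous_evalE i).comp continuous_snd)) (isClosed_discrete _)
  have hclosedB : IsClosed Bs := by
    refine isClosed_iUnion_of_finite (fun t => ?_)
    have heq : {p : B.PathSpace × B.PathSpace | (φ p.1).1 t.val ≠ (φ p.2).1 t.val} =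
        (fun p : B.PathSpace × B.PathSpace => ((φ p.1).1 t.val, (φ p.2).1 t.val)) ⁻¹'
          {q : B'.E t.val × B'.E t.val | q.1 ≠ q.2} := rfl
    rw [heq]
    exact IsClosed.preimage
      (((B'.continuous_evalE t.val).comp (hφ.comp continuous_fst)).prodMk
        ((B'.continuous_evalE t.val).comp (hφ.comp continuous_snd)))
      (isClosed_discrete _)
  have hnonempty : ∀ R, (A R ∩ Bs).Nonempty := by
    intro R
    obtain ⟨x, y, hxy, i, hir, hne⟩ := hcon R
    refine ⟨(x, y), Set.mem_iInter.mpr (fun i' => Set.mem_iInter.mpr (fun hi' => hxy i' hi')),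
      Set.mem_iUnion.mpr ⟨⟨i, hir⟩, hne⟩⟩
  have hsub : ∀ R, A (R + 1) ∩ Bs ⊆ A R ∩ Bs := by
    intro R p hp
    exact ⟨Set.mem_iInter.mpr (fun i => Set.mem_iInter.mpr (fun hi =>
      Set.mem_iInter.mp (Set.mem_iInter.mp hp.1 i) (by omega))), hp.2⟩
  obtain ⟨p, hp⟩ := IsCompact.nonempty_iInter_of_sequence_nonempty_isCompact_isClosed
    (fun R => A R ∩ Bs) hsub hnonempty ((hclosedA 0).inter hclosedB).isCompact
    (fun R => (hclosedA R).inter hclosedB)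
  have heqp : p.1 = p.2 := by
    apply Subtype.ext
    funext i
    have h1 := (Set.mem_iInter.mp hp (i + 1)).1
    exact Set.mem_iInter.mp (Set.mem_iInter.mp h1 i) (Nat.lt_succ_self i)
  obtain ⟨t, hne⟩ := Set.mem_iUnion.mp (Set.mem_iInter.mp hp 0).2
  simp only [Set.mem_setOf_eq] at hne
  rw [heqp] at hne
  exact hne rfl

/-- Every path minimal to a high level agrees with the unique minimal path
to any given level. -/
theorem min_approach (xmin : B.PathSpace) (huniq : ∀ z, B.IsMinPath z → z = xmin)
    (r : ℕ) :
    ∃ J, ∀ z : B.PathSpace, (∀ i, i < J → B.IsMinEdge (z.1 i)) →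
      ∀ i, i < r → z.1 i = xmin.1 i := by
  classical
  letI : ∀ n, TopologicalSpace (B.E n) := fun _ => ⊥
  haveI : ∀ n, DiscreteTopology (B.E n) := fun n => ⟨rfl⟩
  haveI : ∀ n, Finite (B.E n) := fun n => @Finite.of_fintype _ (B.fintE n)
  letI : TopologicalSpace B.PathSpace := B.pathTop
  haveI : CompactSpace B.PathSpace := B.pathCompactSpace
  by_contra hcon
  push_neg at hcon
  set A : ℕ → Set B.PathSpace := fun J =>
    ⋂ (i : ℕ), ⋂ (_ : i < J), {z | B.IsMinEdge (z.1 i)} with hA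
  set Bs : Set B.PathSpace := ⋃ (t : Fin r), {z | z.1 t.val ≠ xmin.1 t.val} with hBs
  have hclosedA : ∀ J, IsClosed (A J) := by
    intro J
    refine isClosed_iInter (fun i => isClosed_iInter (fun _ => ?_))
    exact IsClosed.preimage (B.continuous_evalE i)
      (isClosed_discrete {e : B.E i | B.IsMinEdge e})
  have hclosedB : IsClosed Bs := by
    refine isClosed_iUnion_of_finite (fun t => ?_)
    exact IsClosed.preimage (B.continuous_evalE t.val)
      (isClosed_discrete {e : B.E t.val | e ≠ xmin.1 t.val})
  have hnonempty : ∀ J, (A J ∩ Bs).Nonempty := by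
    intro J
    obtain ⟨z, hz, i, hir, hne⟩ := hcon J
    refine ⟨z, Set.mem_iInter.mpr (fun i' => Set.mem_iInter.mpr (fun hi' => hz i' hi')),
      Set.mem_iUnion.mpr ⟨⟨i, hir⟩, hne⟩⟩
  have hsub : ∀ J, A (J + 1) ∩ Bs ⊆ A J ∩ Bs := by
    intro J z hz
    exact ⟨Set.mem_iInter.mpr (fun i => Set.mem_iInter.mpr (fun hi =>
      Set.mem_iInter.mp (Set.mem_iInter.mp hz.1 i) (by omega))), hz.2⟩
  obtain ⟨z, hz⟩ := IsCompact.nonempty_iInter_of_sequence_nonempty_isCompact_isClosed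
    (fun J => A J ∩ Bs) hsub hnonempty ((hclosedA 0).inter hclosedB).isCompact
    (fun J => (hclosedA J).inter hclosedB)
  have hzmin : B.IsMinPath z := by
    intro i
    have h1 := (Set.mem_iInter.mp hz (i + 1)).1
    exact Set.mem_iInter.mp (Set.mem_iInter.mp h1 i) (Nat.lt_succ_self i)
  obtain ⟨t, hne⟩ := Set.mem_iUnion.mp (Set.mem_iInter.mp hz 0).2
  simp only [Set.mem_setOf_eq] at hne
  rw [huniq z hzmin] at hne
  exact hne rfl

end UniformCont

end BDiagram



open BDiagram in
/-- Implication (1) → (2). -/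
theorem one_to_two (S : BVSystem) (hW : S.B.WeaklyWellTimed S.T) :
    ∃ (ns : ℕ → ℕ) (hmono : StrictMono ns) (h0 : ns 0 = 0)
      (T' : (S.B.Telescope ns hmono h0).PathSpace ≃
        (S.B.Telescope ns hmono h0).PathSpace),
      (S.B.Telescope ns hmono h0).IsVershik T' ∧
      (S.B.Telescope ns hmono h0).WellTimed T' := by
  classical
  choose g hg1 _hg2 hg3 using hW
  set ns : ℕ → ℕ := fun l => Nat.rec 0 (fun _ prev => g (prev + 1)) l with hnsdef
  have hnssucc : ∀ l, ns (l + 1) = g (ns l + 1) := fun l => rfl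
  have hmono : StrictMono ns := strictMono_nat_of_lt_succ (fun l => by
    rw [hnssucc]; have := hg1 (ns l + 1); omega)
  have h0 : ns 0 = 0 := rfl
  refine ⟨ns, hmono, h0, teleT ns hmono h0 S.T,
    teleT_isVershik ns hmono h0 S.T S.vershik, ?_⟩
  intro k hk j hkj
  cases k with
  | zero => omega
  | succ k' =>
      have hlt : g (ns k' + 1) < ns j := by
        have := hmono hkj
        rwa [hnssucc k'] at this
      obtain ⟨x, y, ⟨hxy, hsc, hnsc⟩, hcut⟩ := hg3 (ns k' + 1) (ns j) hlt
      refine ⟨S.B.teleMap ns hmono h0 x, S.B.teleMap ns hmono h0 y,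
        ⟨?_, ?_, ?_⟩, hasCut_teleT ns hmono h0 S.T j x y hcut⟩
      · intro he
        apply hxy
        have := congrArg (conc ns hmono h0) he
        rwa [conc_teleMap, conc_teleMap] at this
      · refine (sameCoding_teleT ns hmono h0 S.T (k' + 1) x y).1 ?_
        rw [hnssucc k']
        exact hsc
      · intro hco
        apply hnsc
        have := (sameCoding_teleT ns hmono h0 S.T (k' + 1 + 1) x y).2 hco
        refine sameCoding_mono S.B S.T ?_ this
        have h1 : ns (k' + 1) < ns (k' + 1 + 1) := hmono (show k' + 1 < k' + 1 + 1 by omega)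
        rw [hnssucc k'] at h1
        omega

open BDiagram in
/-- Implication (2) → (3). -/
theorem two_to_three (S : BVSystem)
    (h2 : ∃ (ns : ℕ → ℕ) (hmono : StrictMono ns) (h0 : ns 0 = 0)
      (T' : (S.B.Telescope ns hmono h0).PathSpace ≃
        (S.B.Telescope ns hmono h0).PathSpace),
      (S.B.Telescope ns hmono h0).IsVershik T' ∧
      (S.B.Telescope ns hmono h0).WellTimed T') :
    ∃ S' : BVSystem, Conjugate S S' ∧ S'.B.WellTimed S'.T := by
  obtain ⟨ns, hmono, h0, T', hV, hWT⟩ := h2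
  have hproper := telescope_proper ns hmono h0 S.proper
  have hsimple := telescope_simple ns hmono h0 S.simple
  refine ⟨⟨S.B.Telescope ns hmono h0, T', hproper, hsimple, hV⟩,
    ⟨teleEquiv ns hmono h0, ?_, ?_, ?_, ?_⟩, hWT⟩
  · exact continuous_teleMap ns hmono h0
  · exact continuous_conc ns hmono h0
  · intro x
    have huniq := vershik_unique (S.B.Telescope ns hmono h0) hproper.1
      (teleT_isVershik ns hmono h0 S.T S.vershik) hV
    have hh := huniq (S.B.teleMap ns hmono h0 x)
    rw [teleT_apply, conc_teleMap] at hh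
    exact hh
  · intro x hx
    exact isMinPath_teleMap ns hmono h0 x hx

open BDiagram in
/-- Implication (3) → (1). -/
theorem three_to_one (S : BVSystem)
    (h3 : ∃ S' : BVSystem, Conjugate S S' ∧ S'.B.WellTimed S'.T) :
    S.B.WeaklyWellTimed S.T := by
  classical
  obtain ⟨S', ⟨φ, hc1, hc2, hTeq, hminpres⟩, hWT⟩ := h3
  obtain ⟨⟨xmin, hxmin, huminS⟩, -⟩ := S.proper
  obtain ⟨⟨xmin', hxmin', humin'⟩, -⟩ := S'.proper
  have hφmin : φ xmin = xmin' := humin' _ (hminpres _ hxmin)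
  have hcomm : ∀ (m : ℤ) (x), φ (S.B.iterZ S.T m x) = S'.B.iterZ S'.T m (φ x) :=
    fun m x => perm_conj_zpow φ S.T S'.T hTeq m x
  have hcomm' : ∀ (m : ℤ) (x'), φ.symm (S'.B.iterZ S'.T m x') =
      S.B.iterZ S.T m (φ.symm x') := by
    intro m x'
    apply φ.injective
    rw [Equiv.apply_symm_apply, hcomm, Equiv.apply_symm_apply]
  -- gauge for transporting codings from S' to S
  have hg1 : ∀ r, ∃ R, ∀ x' y', S'.B.SameCoding S'.T R x' y' →
      S.B.SameCoding S.T r (φ.symm x') (φ.symm y') := by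
    intro r
    obtain ⟨R, hR⟩ := S'.B.uniform_cont S.B φ.symm hc2 r
    refine ⟨R, fun x' y' hs m i hi => ?_⟩
    rw [← hcomm' m x', ← hcomm' m y']
    exact hR _ _ (fun i' hi' => hs m i' hi') i hi
  -- gauge for transporting codings from S to S'
  have hg2 : ∀ r, ∃ R, ∀ x y, S.B.SameCoding S.T R x y →
      S'.B.SameCoding S'.T r (φ x) (φ y) := by
    intro r
    obtain ⟨R, hR⟩ := S.B.uniform_cont S'.B φ hc1 r
    refine ⟨R, fun x y hs m i hi => ?_⟩
    rw [← hcomm m x, ← hcomm m y]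
    exact hR _ _ (fun i' hi' => hs m i' hi') i hi
  -- cut transfer from S' to S
  have hg3 : ∀ j, ∃ Jc, ∀ x' y', S'.B.HasCut S'.T Jc x' y' →
      S.B.HasCut S.T j (φ.symm x') (φ.symm y') := by
    intro j
    obtain ⟨ρ, hρ⟩ := S'.B.uniform_cont S.B φ.symm hc2 j
    obtain ⟨J, hJ⟩ := S'.B.min_approach xmin' humin' ρ
    refine ⟨J, ?_⟩
    rintro x' y' ⟨m, hmx, hmy⟩
    have h4 : φ.symm xmin' = xmin := by rw [← hφmin, Equiv.symm_apply_apply]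
    have key : ∀ z' : S'.B.PathSpace,
        (∀ i, i < J → S'.B.IsMinEdge ((S'.B.iterZ S'.T m z').1 i)) →
        ∀ i, i < j → S.B.IsMinEdge ((S.B.iterZ S.T m (φ.symm z')).1 i) := by
      intro z' hz i hij
      have h1 : ∀ i', i' < ρ → (S'.B.iterZ S'.T m z').1 i' = xmin'.1 i' := hJ _ hz
      have h2 := hρ (S'.B.iterZ S'.T m z') xmin' h1 i hij
      rw [hcomm', h4] at h2
      rw [h2]
      exact hxmin i
    exact ⟨m, key x' hmx, key y' hmy⟩
  -- main argument
  intro K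
  set K1 := max K 1 with hK1def
  obtain ⟨R1, hR1⟩ := hg1 K1
  set k' := max R1 1 with hk'def
  obtain ⟨R2, hR2⟩ := hg2 (k' + 1)
  set Bnd := max R2 (K1 + 1) with hBnddef
  have hpairs : ∀ j', k' < j' → ∃ x y : S.B.PathSpace, ∃ d, K1 ≤ d ∧ d < Bnd ∧
      S.B.DepthPair S.T d x y ∧ S'.B.HasCut S'.T j' (φ x) (φ y) := by
    intro j' hj'
    obtain ⟨x', y', ⟨hne', hsc', hnsc'⟩, hcut'⟩ := hWT k' (le_max_right R1 1) j' hj'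
    have hsc : S.B.SameCoding S.T K1 (φ.symm x') (φ.symm y') :=
      hR1 x' y' (S'.B.sameCoding_mono S'.T (le_max_left R1 1) hsc')
    have hnsc : ¬ S.B.SameCoding S.T Bnd (φ.symm x') (φ.symm y') := by
      intro hco
      apply hnsc'
      have hs2 := hR2 _ _ (S.B.sameCoding_mono S.T (le_max_left R2 (K1 + 1)) hco)
      rwa [Equiv.apply_symm_apply, Equiv.apply_symm_apply] at hs2
    set P : ℕ → Prop := fun d => S.B.SameCoding S.T d (φ.symm x') (φ.symm y') with hP
    have hK1B : K1 ≤ Bnd := by omega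
    set d := Nat.findGreatest P Bnd with hd
    have hPd : P d := Nat.findGreatest_spec hK1B hsc
    have hdK1 : K1 ≤ d := Nat.le_findGreatest hK1B hsc
    have hdB : d < Bnd :=
      lt_of_le_of_ne (Nat.findGreatest_le Bnd) (fun he => hnsc (by rw [← he]; exact hPd))
    have hnPd : ¬ P (d + 1) :=
      Nat.findGreatest_is_greatest (Nat.lt_succ_self d) (by omega)
    have hxy : φ.symm x' ≠ φ.symm y' := fun he => hne' (φ.symm.injective he)
    refine ⟨φ.symm x', φ.symm y', d, hdK1, hdB, ⟨hxy, hPd, hnPd⟩, ?_⟩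
    rw [Equiv.apply_symm_apply, Equiv.apply_symm_apply]
    exact hcut'
  choose xf yf df hdf1 hdf2 hdp hcut using fun n : ℕ => hpairs (k' + 1 + n) (by omega)
  obtain ⟨d', hd'⟩ := Finite.exists_infinite_fiber
    (fun n => (⟨df n, hdf2 n⟩ : Fin Bnd))
  have hfibinf : ((fun n => (⟨df n, hdf2 n⟩ : Fin Bnd)) ⁻¹' {d'}).Infinite :=
    Set.infinite_coe_iff.mp hd'
  obtain ⟨n₀, hn₀⟩ := hfibinf.nonempty
  have hdn₀ : df n₀ = d'.val := congrArg Fin.val hn₀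
  refine ⟨df n₀, le_trans (le_max_left K 1) (hdf1 n₀), le_trans (le_max_right K 1) (hdf1 n₀), ?_⟩
  intro j hj
  obtain ⟨Jc, hJc⟩ := hg3 j
  have hex : ∃ n, n ∈ ((fun n => (⟨df n, hdf2 n⟩ : Fin Bnd)) ⁻¹' {d'}) ∧ Jc ≤ k' + 1 + n := by
    by_contra hco
    push_neg at hco
    refine hfibinf (Set.Finite.subset (Set.finite_Iio Jc) ?_)
    intro n hn
    have := hco n hn
    simp only [Set.mem_Iio]
    omega
  obtain ⟨n, hnfib, hnJc⟩ := hex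
  have hdn : df n = df n₀ := by
    have h1 : (⟨df n, hdf2 n⟩ : Fin Bnd) = d' := hnfib
    rw [hdn₀, ← h1]
  refine ⟨xf n, yf n, by rw [← hdn]; exact hdp n, ?_⟩
  have hcutJc : S'.B.HasCut S'.T Jc (φ (xf n)) (φ (yf n)) :=
    S'.B.hasCut_mono S'.T hnJc (hcut n)
  have := hJc _ _ hcutJc
  rwa [Equiv.symm_apply_apply, Equiv.symm_apply_apply] at this
/-- For a simple, properly ordered Bratteli–Vershik system the
following are equivalent: (1) it is weakly well timed; (2) some telescoping of it
is well timed; (3) it is conjugate to a well timed system. -/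
theorem weaklyWellTimed_tfae (S : BVSystem) :
    List.TFAE
      [S.B.WeaklyWellTimed S.T,
       ∃ (ns : ℕ → ℕ) (hmono : StrictMono ns) (h0 : ns 0 = 0)
         (T' : (S.B.Telescope ns hmono h0).PathSpace ≃
            (S.B.Telescope ns hmono h0).PathSpace),
         (S.B.Telescope ns hmono h0).IsVershik T' ∧
         (S.B.Telescope ns hmono h0).WellTimed T',
       ∃ S' : BVSystem, Conjugate S S' ∧ S'.B.WellTimed S'.T] := by
  tfae_have 1 → 2 := one_to_two S
  tfae_have 2 → 3 := two_to_three S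
  tfae_have 3 → 1 := three_to_one S
  tfae_finish
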